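/- Let n ≥ 1 and let d : ℝ → ({−1,1}ⁿ → (−1,1)) be such that for every vertex y the map t ↦ d_y(t) is differentiable and satisfies d_y'(t) = Σ_{x : x∼y} (d_x(t) − d_y(t)). Define r(t) = 2⁻ⁿ · Σ_y √(1 − d_y(t)²). Then r is differentiable and for every t, r'(t) = 2⁻ⁿ · Σ_{x∼y} (d_x(t) − d_y(t)) · (d_x(t)/√(1−d_x(t)²) − d_y(t)/√(1−d_y(t)²)), where the sum is over unordered pairs of adjacent vertices, each counted once. -/

import Mathlib

/-- Flip the `i`-th coordinate of a vertex of the hypercube. -/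
def flipCoord {n : ℕ} (y : Fin n → Bool) (i : Fin n) : Fin n → Bool :=
  Function.update y i (!(y i))

lemma flipCoord_flip_flip {n : ℕ} (y : Fin n → Bool) (i : Fin n) :
    flipCoord (flipCoord y i) i = y := by
  funext j
  by_cases h : j = i <;> simp [flipCoord, Function.update, h]

theorem stmt11 (n : ℕ) (hn : 1 ≤ n) (d : ℝ → (Fin n → Bool) → ℝ)
    (hmem : ∀ t y, d t y ∈ Set.Ioo (-1 : ℝ) 1)
    (hode : ∀ (y : Fin n → Bool) (t : ℝ),
      HasDerivAt (fun s => d s y) (∑ i : Fin n, (d t (flipCoord y i) - d t y)) t)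
    (t : ℝ) :
    HasDerivAt (fun s => ((2 : ℝ) ^ n)⁻¹ * ∑ y : Fin n → Bool,
        Real.sqrt (1 - (d s y) ^ 2))
      (((2 : ℝ) ^ n)⁻¹ * ((1 / 2) * ∑ y : Fin n → Bool, ∑ i : Fin n,
        (d t (flipCoord y i) - d t y) *
          (d t (flipCoord y i) / Real.sqrt (1 - (d t (flipCoord y i)) ^ 2) -
           d t y / Real.sqrt (1 - (d t y) ^ 2)))) t := by
  have hpos : ∀ y, (0:ℝ) < 1 - (d t y) ^ 2 := by
    intro y
    have h := hmem t y
    nlinarith [h.1, h.2]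
  have hne : ∀ y, (1:ℝ) - (d t y) ^ 2 ≠ 0 := fun y => (hpos y).ne'
  have hderiv : ∀ y : Fin n → Bool, HasDerivAt (fun u => Real.sqrt (1 - (d u y) ^ 2))
      ((-(2 * d t y * (∑ i : Fin n, (d t (flipCoord y i) - d t y)))) /
        (2 * Real.sqrt (1 - (d t y) ^ 2))) t := by
    intro y
    have h1 : HasDerivAt (fun u => 1 - (d u y) ^ 2)
        (-(2 * d t y * (∑ i : Fin n, (d t (flipCoord y i) - d t y)))) t := by
      have := ((hode y t).pow 2).const_sub 1
      refine this.congr_deriv ?_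
      push_cast
      ring
    exact h1.sqrt (hne y)
  have hsum : HasDerivAt (fun u => ∑ y : Fin n → Bool, Real.sqrt (1 - (d u y) ^ 2))
      (∑ y : Fin n → Bool, (-(2 * d t y * (∑ i : Fin n, (d t (flipCoord y i) - d t y)))) /
        (2 * Real.sqrt (1 - (d t y) ^ 2))) t :=
    HasDerivAt.fun_sum (fun y _ => hderiv y)
  have hmain := hsum.const_mul (((2:ℝ) ^ n)⁻¹)
  refine hmain.congr_deriv (Eq.symm ?_)
  congr 1
  -- algebraic identity
  set f : (Fin n → Bool) → Fin n → ℝ := fun y i =>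
    (d t (flipCoord y i) - d t y) * (d t y / Real.sqrt (1 - (d t y) ^ 2)) with hf
  have key : ∀ i : Fin n, (∑ y : Fin n → Bool, f (flipCoord y i) i)
      = ∑ y : Fin n → Bool, f y i := by
    intro i
    exact Fintype.sum_equiv (Function.Involutive.toPerm _ (fun y => flipCoord_flip_flip y i))
      _ _ (fun y => rfl)
  have hg : ∀ (y : Fin n → Bool) (i : Fin n),
      (d t (flipCoord y i) - d t y) *
        (d t (flipCoord y i) / Real.sqrt (1 - (d t (flipCoord y i)) ^ 2) -
         d t y / Real.sqrt (1 - (d t y) ^ 2))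
      = -f (flipCoord y i) i - f y i := by
    intro y i
    simp only [hf, flipCoord_flip_flip]
    ring
  calc (1/2 : ℝ) * ∑ y : Fin n → Bool, ∑ i : Fin n,
        (d t (flipCoord y i) - d t y) *
          (d t (flipCoord y i) / Real.sqrt (1 - (d t (flipCoord y i)) ^ 2) -
           d t y / Real.sqrt (1 - (d t y) ^ 2))
      = (1/2 : ℝ) * ∑ i : Fin n, ∑ y : Fin n → Bool, (-f (flipCoord y i) i - f y i) := by
        rw [Finset.sum_comm]
        congr 1
        exact Finset.sum_congr rfl fun i _ => Finset.sum_congr rfl fun y _ => hg y i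
    _ = (1/2 : ℝ) * ∑ i : Fin n, (-(2:ℝ)) * ∑ y : Fin n → Bool, f y i := by
        congr 1
        refine Finset.sum_congr rfl fun i _ => ?_
        rw [Finset.sum_sub_distrib]
        simp only [Finset.sum_neg_distrib, key i]
        ring
    _ = ∑ y : Fin n → Bool, (-(2 * d t y * (∑ i : Fin n, (d t (flipCoord y i) - d t y)))) /
          (2 * Real.sqrt (1 - (d t y) ^ 2)) := by
        rw [← Finset.mul_sum]
        rw [show (∑ i : Fin n, ∑ y : Fin n → Bool, f y i)
            = ∑ y : Fin n → Bool, ∑ i : Fin n, f y i from Finset.sum_comm]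
        rw [← mul_assoc]
        norm_num
        rw [← Finset.sum_neg_distrib]
        refine Finset.sum_congr rfl fun y _ => ?_
        have hsne : Real.sqrt (1 - (d t y) ^ 2) ≠ 0 :=
          (Real.sqrt_pos.mpr (hpos y)).ne'
        rw [hf]
        simp only []
        rw [← Finset.sum_mul, Finset.sum_sub_distrib, Finset.sum_const,
          Finset.card_univ, Fintype.card_fin, nsmul_eq_mul]
        field_simp
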